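/- Let f ∈ Ω, i.e., f is analytic on 𝔻 with f(0)=0, f'(0)=1, and |zf'(z) − f(z)| < 1/2 on 𝔻. Then there exists an analytic function ω on 𝔻 with ω(0) = 0, |ω(z)| ≤ |z|, and |ω'(z)| ≤ 1 for all z ∈ 𝔻, such that f(z) = z + (1/2)z·ω(z). -/

import Mathlib

open Metric Set Filter
open scoped Topology

private lemma diffOn_dslope_ball {f : ℂ → ℂ}
    (hf : DifferentiableOn ℂ f (ball (0:ℂ) 1)) :
    DifferentiableOn ℂ (dslope f 0) (ball (0:ℂ) 1) := by
  intro x hx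
  rcases eq_or_ne x 0 with rfl | hne
  · obtain ⟨p, hp⟩ := (hf.analyticOnNhd isOpen_ball) 0 (mem_ball_self one_pos)
    exact hp.has_fpower_series_dslope_fslope.analyticAt.differentiableAt.differentiableWithinAt
  · exact (differentiableWithinAt_dslope_of_ne hne).2 (hf x hx)

/-- Peng–Zhong representation: every f ∈ Ω can be written as f(z) = z + (1/2)zω(z)
with ω analytic, ω(0) = 0, |ω(z)| ≤ |z| and |ω'(z)| ≤ 1 on the unit disk. -/
theorem omega_representation (f : ℂ → ℂ)
    (hf : DifferentiableOn ℂ f (ball (0:ℂ) 1))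
    (hf0 : f 0 = 0) (hf1 : deriv f 0 = 1)
    (hΩ : ∀ z ∈ ball (0:ℂ) 1, ‖z * deriv f z - f z‖ < 1 / 2) :
    ∃ ω : ℂ → ℂ, DifferentiableOn ℂ ω (ball (0:ℂ) 1) ∧ ω 0 = 0 ∧
      (∀ z ∈ ball (0:ℂ) 1, ‖ω z‖ ≤ ‖z‖) ∧
      (∀ z ∈ ball (0:ℂ) 1, ‖deriv ω z‖ ≤ 1) ∧
      ∀ z ∈ ball (0:ℂ) 1, f z = z + (1 / 2 : ℂ) * z * ω z := by
  have h0B : (0:ℂ) ∈ ball (0:ℂ) 1 := mem_ball_self one_pos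
  set g : ℂ → ℂ := fun z => z * deriv f z - f z with hg_def
  have hfa : AnalyticOnNhd ℂ f (ball (0:ℂ) 1) := hf.analyticOnNhd isOpen_ball
  have hf' : DifferentiableOn ℂ (deriv f) (ball (0:ℂ) 1) := hfa.deriv.differentiableOn
  have hg : DifferentiableOn ℂ g (ball (0:ℂ) 1) := (differentiableOn_id.mul hf').sub hf
  have hg0 : g 0 = 0 := by simp [hg_def, hf0]
  have hfz : ∀ z ∈ ball (0:ℂ) 1, HasDerivAt f (deriv f z) z := fun z hz =>
    (hf.differentiableAt (isOpen_ball.mem_nhds hz)).hasDerivAt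
  have hdg0 : deriv g 0 = 0 := by
    have h1 : HasDerivAt (deriv f) (deriv (deriv f) 0) 0 :=
      (hfa.deriv 0 h0B).differentiableAt.hasDerivAt
    have h2 : HasDerivAt g (1 * deriv f 0 + 0 * deriv (deriv f) 0 - deriv f 0) 0 :=
      ((hasDerivAt_id (0:ℂ)).mul h1).sub (hfz 0 h0B)
    rw [h2.deriv]; ring
  set g₁ : ℂ → ℂ := dslope g 0 with hg₁_def
  set g₂ : ℂ → ℂ := dslope g₁ 0 with hg₂_def
  have hg₁ : DifferentiableOn ℂ g₁ (ball (0:ℂ) 1) := diffOn_dslope_ball hg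
  have hg₂ : DifferentiableOn ℂ g₂ (ball (0:ℂ) 1) := diffOn_dslope_ball hg₁
  have hg₁0 : g₁ 0 = 0 := by
    rw [hg₁_def, dslope_same]; exact hdg0
  -- First Schwarz: ‖g₁‖ ≤ (1/2)/r on ball 0 r
  have hb1 : ∀ r : ℝ, 0 < r → r ≤ 1 → ∀ z ∈ ball (0:ℂ) r, ‖g₁ z‖ ≤ (1/2)/r := by
    intro r hr hr1 z hz
    have hsub : ball (0:ℂ) r ⊆ ball (0:ℂ) 1 := ball_subset_ball hr1
    have maps : MapsTo g (ball (0:ℂ) r) (ball (g 0) (1/2)) := by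
      intro w hw
      rw [hg0]
      exact mem_ball_zero_iff.2 (hΩ w (hsub hw))
    exact Complex.norm_dslope_le_div_of_mapsTo_ball (hg.mono hsub) (maps.mono_right ball_subset_closedBall) hz
  -- Second Schwarz with limit: ‖g₂ z‖ ≤ 1/2 on the unit ball
  have hb2 : ∀ z ∈ ball (0:ℂ) 1, ‖g₂ z‖ ≤ 1/2 := by
    intro z hz
    have hzn : ‖z‖ < 1 := mem_ball_zero_iff.1 hz
    have key : ∀ r : ℝ, ‖z‖ < r → r < 1 → ‖g₂ z‖ ≤ 1/(2*r^3) := by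
      intro r hr hr1
      have hr0 : 0 < r := lt_of_le_of_lt (norm_nonneg z) hr
      have hsub : ball (0:ℂ) r ⊆ ball (0:ℂ) 1 := ball_subset_ball hr1.le
      have maps : MapsTo g₁ (ball (0:ℂ) r) (ball (g₁ 0) (1/(2*r^2))) := by
        intro w hw
        rw [hg₁0, mem_ball_zero_iff]
        calc ‖g₁ w‖ ≤ (1/2)/r := hb1 r hr0 hr1.le w hw
          _ < 1/(2*r^2) := by
            rw [div_lt_div_iff₀ hr0 (by positivity)]
            nlinarith
      have hle := Complex.norm_dslope_le_div_of_mapsTo_ball (hg₁.mono hsub) (maps.mono_right ball_subset_closedBall)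
        (mem_ball_zero_iff.2 hr)
      calc ‖g₂ z‖ ≤ (1/(2*r^2))/r := hle
        _ = 1/(2*r^3) := by ring
    have hlim : Tendsto (fun r : ℝ => 1/(2*r^3)) (𝓝[<] (1:ℝ)) (𝓝 (1/2)) := by
      have hc : ContinuousAt (fun r : ℝ => 1/(2*r^3)) 1 :=
        ContinuousAt.div continuousAt_const (by fun_prop) (by norm_num)
      have := hc.tendsto.mono_left (nhdsWithin_le_nhds (s := Iio (1:ℝ)))
      norm_num at this
      convert this using 2
      norm_num
    refine ge_of_tendsto hlim ?_
    filter_upwards [Ioo_mem_nhdsLT_of_mem (⟨hzn, le_rfl⟩ : (1:ℝ) ∈ Ioc ‖z‖ 1)] with r hr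
    exact key r hr.1 hr.2
  -- the function ω
  set F : ℂ → ℂ := fun z => f z - z with hF_def
  have hF : DifferentiableOn ℂ F (ball (0:ℂ) 1) := hf.sub differentiableOn_id
  set ω : ℂ → ℂ := fun z => 2 * dslope F 0 z with hω_def
  have hωd : DifferentiableOn ℂ ω (ball (0:ℂ) 1) := (diffOn_dslope_ball hF).const_mul 2
  have hF0 : F 0 = 0 := by simp [hF_def, hf0]
  have hdF0 : deriv F 0 = 0 := by
    have h1 : HasDerivAt F (deriv f 0 - 1) 0 := (hfz 0 h0B).sub (hasDerivAt_id (0:ℂ))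
    rw [h1.deriv, hf1, sub_self]
  have hω0 : ω 0 = 0 := by
    rw [hω_def]; simp [dslope_same, hdF0]
  -- deriv ω = 2 * g₂ away from 0
  have hder_ne : ∀ z ∈ ball (0:ℂ) 1, z ≠ 0 → deriv ω z = 2 * g₂ z := by
    intro z hz hne
    have h1 : HasDerivAt (fun w : ℂ => w⁻¹ * (f w - w))
        (-(z^2)⁻¹ * (f z - z) + z⁻¹ * (deriv f z - 1)) z :=
      (hasDerivAt_inv hne).mul ((hfz z hz).sub (hasDerivAt_id z))
    have h2 : HasDerivAt (fun w : ℂ => 2 * (w⁻¹ * (f w - w)))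
        (2 * (-(z^2)⁻¹ * (f z - z) + z⁻¹ * (deriv f z - 1))) z := h1.const_mul 2
    have heq : ω =ᶠ[𝓝 z] fun w : ℂ => 2 * (w⁻¹ * (f w - w)) := by
      filter_upwards [isOpen_ne.mem_nhds hne] with w hw
      rw [hω_def]
      simp only [dslope_of_ne _ hw, slope_def_field, hF_def, hF0, hf0, sub_zero]
      rw [div_eq_inv_mul]
    have hzg : g₂ z = z⁻¹ * (z⁻¹ * g z) := by
      rw [hg₂_def, dslope_of_ne _ hne, slope_def_field, hg₁0, hg₁_def,
        dslope_of_ne _ hne, slope_def_field, hg0]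
      rw [sub_zero, sub_zero, sub_zero, div_div]
      field_simp
    rw [heq.deriv_eq, h2.deriv, hzg, hg_def]
    field_simp
    ring
  have hder : ∀ z ∈ ball (0:ℂ) 1, deriv ω z = 2 * g₂ z := by
    intro z hz
    rcases eq_or_ne z 0 with rfl | hne
    · have hcont1 : ContinuousAt (deriv ω) 0 :=
        (((hωd.analyticOnNhd isOpen_ball).deriv) 0 h0B).continuousAt
      have hcont2 : ContinuousAt (fun w => 2 * g₂ w) 0 :=
        continuousAt_const.mul
          (hg₂.differentiableAt (isOpen_ball.mem_nhds h0B)).continuousAt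
      have hev : deriv ω =ᶠ[𝓝[≠] (0:ℂ)] fun w => 2 * g₂ w := by
        have hBmem : ball (0:ℂ) 1 ∈ 𝓝[≠] (0:ℂ) :=
          nhdsWithin_le_nhds (isOpen_ball.mem_nhds h0B)
        filter_upwards [hBmem, self_mem_nhdsWithin] with w hwB hwne
        exact hder_ne w hwB hwne
      have t1 : Tendsto (deriv ω) (𝓝[≠] (0:ℂ)) (𝓝 (deriv ω 0)) :=
        hcont1.tendsto.mono_left nhdsWithin_le_nhds
      have t2 : Tendsto (deriv ω) (𝓝[≠] (0:ℂ)) (𝓝 (2 * g₂ 0)) :=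
        (hcont2.tendsto.mono_left nhdsWithin_le_nhds).congr' hev.symm
      exact tendsto_nhds_unique t1 t2
    · exact hder_ne z hz hne
  have hbound : ∀ z ∈ ball (0:ℂ) 1, ‖deriv ω z‖ ≤ 1 := by
    intro z hz
    rw [hder z hz, norm_mul]
    have h2 : ‖(2:ℂ)‖ = 2 := by norm_num
    rw [h2]
    linarith [hb2 z hz]
  refine ⟨ω, hωd, hω0, ?_, hbound, ?_⟩
  · intro z hz
    have := (convex_ball (0:ℂ) 1).norm_image_sub_le_of_norm_deriv_le
      (fun x hx => hωd.differentiableAt (isOpen_ball.mem_nhds hx))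
      hbound hz h0B
    simpa [hω0] using this
  · intro z hz
    rcases eq_or_ne z 0 with rfl | hne
    · simp [hf0]
    · rw [hω_def]
      simp only [dslope_of_ne _ hne, slope_def_field, hF_def, hF0, hf0]
      field_simp
      ring
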